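/- Fix p ∈ (0,1) and let K be a p-core CRG (i.e., the minimum g_K(p) is attained by a unique probability mass μ which has full support). Suppose x ≠ y are vertices of K with the edge xy not gray. If K′ is obtained from K by recoloring the edge xy gray, then g_{K′}(p) < g_K(p). -/
import Mathlib


open Finset

inductive EColor | white | black | gray
deriving DecidableEq

/-- The `p`-weight of an edge color: `p` for white, `1-p` for black, `0` for gray. -/
def wval (p : ℝ) : EColor → ℝ
  | .white => p
  | .black => 1 - p
  | .gray => 0

/-- The matrix `M_K(p)` of a CRG given by vertex colors `vb` (`true` = black)
and edge colors `ec`. -/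
def Mmat {V : Type*} [DecidableEq V] (vb : V → Bool) (ec : V → V → EColor) (p : ℝ)
    (x y : V) : ℝ :=
  if x = y then (if vb x then 1 - p else p) else wval p (ec x y)

/-- `μ` is a probability mass. -/
def IsProb {V : Type*} [Fintype V] (μ : V → ℝ) : Prop :=
  (∀ x, 0 ≤ μ x) ∧ ∑ x, μ x = 1

/-- The quadratic form `⟨μ, M_K(p) μ⟩`. -/
def QF {V : Type*} [Fintype V] [DecidableEq V] (vb : V → Bool) (ec : V → V → EColor)
    (p : ℝ) (μ : V → ℝ) : ℝ :=
  ∑ x, ∑ y, μ x * Mmat vb ec p x y * μ y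

/-- `g` is the minimum of the quadratic form over probability masses, i.e. `g = g_K(p)`. -/
def gIs {V : Type*} [Fintype V] [DecidableEq V] (vb : V → Bool) (ec : V → V → EColor)
    (p g : ℝ) : Prop :=
  IsLeast {t | ∃ μ : V → ℝ, IsProb μ ∧ t = QF vb ec p μ} g

/-- The weighted gray-degree `d_G(u) = ∑_{v : uv gray} μ(v)`. -/
def grayDeg {V : Type*} [Fintype V] [DecidableEq V] (ec : V → V → EColor) (μ : V → ℝ)
    (u : V) : ℝ :=
  ∑ v ∈ Finset.univ.filter (fun v => v ≠ u ∧ ec u v = EColor.gray), μ v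

/-- recoloring a non-gray edge of a `p`-core CRG gray strictly decreases `g`. -/
theorem stmt2 {V : Type*} [Fintype V] [DecidableEq V]
    (vb : V → Bool) (ec : V → V → EColor) (p g : ℝ) (hp0 : 0 < p) (hp1 : p < 1)
    (hsymm : ∀ a b, ec a b = ec b a)
    (μ : V → ℝ) (hμ : IsProb μ) (hμg : QF vb ec p μ = g)
    (hmin : gIs vb ec p g)
    (huniq : ∀ ν : V → ℝ, IsProb ν → QF vb ec p ν = g → ν = μ)
    (hfull : ∀ x, 0 < μ x)
    (x y : V) (hxy : x ≠ y) (hng : ec x y ≠ EColor.gray)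
    (ec' : V → V → EColor)
    (hec' : ∀ a b, ec' a b =
      if (a = x ∧ b = y) ∨ (a = y ∧ b = x) then EColor.gray else ec a b)
    (g' : ℝ) (hg' : gIs vb ec' p g') :
    g' < g := by
  have hw : 0 < wval p (ec x y) := by
    cases h : ec x y <;> simp [wval, h] at * <;> linarith
  have hkey : QF vb ec' p μ = g - 2 * (μ x * wval p (ec x y) * μ y) := by
    rw [← hμg]
    unfold QF
    have hM' : ∀ a b, Mmat vb ec' p a b
        = if (a = x ∧ b = y) ∨ (a = y ∧ b = x) then 0 else Mmat vb ec p a b := by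
      intro a b
      unfold Mmat
      rw [hec']
      by_cases h : (a = x ∧ b = y) ∨ (a = y ∧ b = x)
      · have hab : a ≠ b := by
          rcases h with ⟨rfl, rfl⟩ | ⟨rfl, rfl⟩
          · exact hxy
          · exact hxy.symm
        simp [h, hab, wval]
      · simp [h]
    have hterm : ∀ a b, μ a * Mmat vb ec' p a b * μ b
        = μ a * Mmat vb ec p a b * μ b
          - ((if a = x ∧ b = y then μ x * wval p (ec x y) * μ y else 0)
           + (if a = y ∧ b = x then μ x * wval p (ec x y) * μ y else 0)) := by
      intro a b
      rw [hM']
      by_cases h1 : a = x ∧ b = y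
      · obtain ⟨rfl, rfl⟩ := h1
        have h2 : ¬(a = b ∧ b = a) := fun h => hxy h.1
        rw [if_pos (Or.inl ⟨rfl, rfl⟩), if_pos ⟨rfl, rfl⟩, if_neg h2]
        simp [Mmat, hxy]
        try ring
      · by_cases h2 : a = y ∧ b = x
        · obtain ⟨rfl, rfl⟩ := h2
          rw [if_pos (Or.inr ⟨rfl, rfl⟩), if_neg h1, if_pos ⟨rfl, rfl⟩]
          simp [Mmat, hxy.symm, hsymm a b]
          try ring
        · rw [if_neg (by tauto), if_neg h1, if_neg h2]
          ring
    have hsum : ∀ (c : ℝ) (u v : V), u ≠ v →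
        (∑ a : V, ∑ b : V, if a = u ∧ b = v then c else 0) = c := by
      intro c u v _
      simp only [ite_and]
      have hin : ∀ a : V, (∑ b : V, if a = u then if b = v then c else 0 else 0)
          = if a = u then c else 0 := by
        intro a; by_cases h : a = u <;> simp [h, Finset.sum_ite_eq']
      simp [hin, Finset.sum_ite_eq']
    simp only [hterm, Finset.sum_sub_distrib, Finset.sum_add_distrib]
    rw [hsum _ x y hxy, hsum _ y x hxy.symm]
    ring
  have hle : g' ≤ QF vb ec' p μ := hg'.2 ⟨μ, hμ, rfl⟩
  have hpos : 0 < μ x * wval p (ec x y) * μ y := by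
    have := hfull x; have := hfull y; positivity
  linarith
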